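/- Let X be a finite alphabet, F a set of words over X, and w a word over X. In the free associative algebra k⟨X⟩ = MonoidAlgebra k (FreeMonoid X) over a field k, the element corresponding to the word w lies in the two-sided ideal generated by the elements corresponding to the words of F if and only if some f ∈ F is a contiguous factor of w, i.e. there exist words u, v with w = u ++ f ++ v. -/

import Mathlib

/-- In the free associative algebra `k⟨X⟩ = MonoidAlgebra k (FreeMonoid X)`, the element
corresponding to a word `w` lies in the two-sided ideal generated by the elements corresponding
to the words of `F` if and only if some `f ∈ F` is a contiguous factor of `w`. -/
theorem monomial_mem_twoSidedIdeal_span_iff_factor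
    (k X : Type*) [Field k] [Fintype X]
    (F : Set (FreeMonoid X)) (w : FreeMonoid X) :
    MonoidAlgebra.of k (FreeMonoid X) w ∈
      TwoSidedIdeal.span ((MonoidAlgebra.of k (FreeMonoid X)) '' F) ↔
    ∃ f ∈ F, ∃ u v : FreeMonoid X, w = u * f * v := by
  classical
  set T : Set (FreeMonoid X) := {a | ∃ f ∈ F, ∃ u v : FreeMonoid X, a = u * f * v} with hT
  have hTl : ∀ (x : FreeMonoid X) {a}, a ∈ T → x * a ∈ T := by
    rintro x a ⟨f, hf, u, v, rfl⟩
    exact ⟨f, hf, x * u, v, by simp [mul_assoc]⟩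
  have hTr : ∀ (x : FreeMonoid X) {a}, a ∈ T → a * x ∈ T := by
    rintro x a ⟨f, hf, u, v, rfl⟩
    exact ⟨f, hf, u, v * x, by simp [mul_assoc]⟩
  set C : Set (MonoidAlgebra k (FreeMonoid X)) := {p | ∀ a ∈ p.coeff.support, a ∈ T} with hC
  have h0 : (0 : MonoidAlgebra k (FreeMonoid X)) ∈ C := by
    intro a ha; simp at ha
  have hadd : ∀ {x y : MonoidAlgebra k (FreeMonoid X)}, x ∈ C → y ∈ C → x + y ∈ C := by
    intro x y hx hy a ha
    rcases Finset.mem_union.1 (Finsupp.support_add ha) with h | h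
    exacts [hx a h, hy a h]
  have hneg : ∀ {x : MonoidAlgebra k (FreeMonoid X)}, x ∈ C → -x ∈ C := by
    intro x hx a ha
    rw [MonoidAlgebra.coeff_neg, Finsupp.support_neg] at ha
    exact hx a ha
  have hl : ∀ {x y : MonoidAlgebra k (FreeMonoid X)}, y ∈ C → x * y ∈ C := by
    intro x y hy a ha
    obtain ⟨b, hb, c, hc, rfl⟩ := Finset.mem_mul.1 (MonoidAlgebra.support_coeff_mul_subset x y ha)
    exact hTl b (hy c hc)
  have hr : ∀ {x y : MonoidAlgebra k (FreeMonoid X)}, x ∈ C → x * y ∈ C := by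
    intro x y hx a ha
    obtain ⟨b, hb, c, hc, rfl⟩ := Finset.mem_mul.1 (MonoidAlgebra.support_coeff_mul_subset x y ha)
    exact hTr c (hx b hb)
  constructor
  · intro hw
    have hsub : (MonoidAlgebra.of k (FreeMonoid X)) '' F ⊆
        (TwoSidedIdeal.mk' C h0 hadd hneg hl hr : Set (MonoidAlgebra k (FreeMonoid X))) := by
      rintro _ ⟨f, hf, rfl⟩
      rw [SetLike.mem_coe, TwoSidedIdeal.mem_mk']
      intro a ha
      have : a = f := by
        have := Finsupp.support_single_subset ha
        simpa using this
      exact this ▸ ⟨f, hf, 1, 1, by simp⟩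
    have := TwoSidedIdeal.mem_span_iff.1 hw _ hsub
    rw [TwoSidedIdeal.mem_mk'] at this
    have hw' : w ∈ T := by
      apply this
      simp [MonoidAlgebra.of_apply, MonoidAlgebra.coeff_single, Finsupp.support_single_ne_zero _
        (one_ne_zero (α := k))]
    exact hw'
  · rintro ⟨f, hf, u, v, rfl⟩
    have hfmem : MonoidAlgebra.of k (FreeMonoid X) f ∈
        TwoSidedIdeal.span ((MonoidAlgebra.of k (FreeMonoid X)) '' F) :=
      TwoSidedIdeal.subset_span ⟨f, hf, rfl⟩
    rw [map_mul, map_mul]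
    exact TwoSidedIdeal.mul_mem_right _ _ _
      (TwoSidedIdeal.mul_mem_left _ _ _ hfmem)
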